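/- Fix an integer n ≥ 1, a symmetric n×n real matrix C_sig, a sequence of symmetric matrices (E_k), a sequence of real numbers (σ_k²), a sequence of step sizes (η_k), and an orthogonal matrix M₀. For skew-symmetric X the Cayley map Cay(X) := (I − X/2)⁻¹(I + X/2) is well defined (I − X/2 is invertible since X is skew-symmetric). Define two sequences recursively: M_{k+1} = M_k · Cay(η_k Ω_{C_k}(M_k)) with C_k = C_sig + σ_k² I + E_k, and N_{k+1} = N_k · Cay(η_k Ω_{C_k'}(N_k)) with C_k' = C_sig + E_k and N₀ = M₀, where Ω_C(M) := [MᵀCM, diag(MᵀCM)]. Then M_k = N_k for every k; i.e., the discrete trajectory is pointwise invariant to the isotropic shift sequence (σ_k²). -/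
import Mathlib


open Matrix

/-- The diagonal matrix whose diagonal agrees with `X`. -/
noncomputable def diagPart {n : ℕ} (X : Matrix (Fin n) (Fin n) ℝ) :
    Matrix (Fin n) (Fin n) ℝ :=
  Matrix.diagonal (fun i => X i i)

/-- The commutator generator `Ω_C(M) = [MᵀCM, diag(MᵀCM)]`. -/
noncomputable def commGen {n : ℕ} (C M : Matrix (Fin n) (Fin n) ℝ) :
    Matrix (Fin n) (Fin n) ℝ :=
  (Mᵀ * C * M) * diagPart (Mᵀ * C * M) - diagPart (Mᵀ * C * M) * (Mᵀ * C * M)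

/-- The Cayley map `Cay(X) = (I − X/2)⁻¹ (I + X/2)`. -/
noncomputable def cayley {n : ℕ} (X : Matrix (Fin n) (Fin n) ℝ) :
    Matrix (Fin n) (Fin n) ℝ :=
  (1 - (1 / 2 : ℝ) • X)⁻¹ * (1 + (1 / 2 : ℝ) • X)

section Aux
variable {n : ℕ}

lemma cayley_isUnit_factor {X : Matrix (Fin n) (Fin n) ℝ} (hX : Xᵀ = -X) :
    IsUnit (1 - (1 / 2 : ℝ) • X) := by
  set Y := (1 / 2 : ℝ) • X with hY
  have hYt : Yᵀ = -Y := by rw [hY, transpose_smul, hX, smul_neg]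
  have key : ((1 : Matrix (Fin n) (Fin n) ℝ) - Y)ᵀ * (1 - Y) = 1 + Yᵀ * Y := by
    rw [hYt]
    simp [transpose_sub, hYt, sub_mul, mul_sub, add_mul, mul_add, neg_mul, mul_neg]
    abel
  have hpd : ((1 : Matrix (Fin n) (Fin n) ℝ) + Yᵀ * Y).PosDef := by
    apply Matrix.PosDef.add_posSemidef Matrix.PosDef.one
    simpa using Matrix.posSemidef_conjTranspose_mul_self Y
  have hu : IsUnit (((1 : Matrix (Fin n) (Fin n) ℝ) - Y)ᵀ * (1 - Y)) := key ▸ hpd.isUnit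
  have hdet := (Matrix.isUnit_iff_isUnit_det _).mp hu
  rw [Matrix.det_mul, Matrix.det_transpose] at hdet
  exact (Matrix.isUnit_iff_isUnit_det _).mpr (isUnit_of_mul_isUnit_left hdet)

lemma cayley_orthogonal {X : Matrix (Fin n) (Fin n) ℝ} (hX : Xᵀ = -X) :
    (cayley X)ᵀ * cayley X = 1 := by
  set P := (1 : Matrix (Fin n) (Fin n) ℝ) - (1 / 2 : ℝ) • X with hP
  set Q := (1 : Matrix (Fin n) (Fin n) ℝ) + (1 / 2 : ℝ) • X with hQ
  have hPt : Pᵀ = Q := by rw [hP, hQ, transpose_sub, transpose_one, transpose_smul, hX, smul_neg, sub_neg_eq_add]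
  have hQt : Qᵀ = P := by rw [hP, hQ, transpose_add, transpose_one, transpose_smul, hX, smul_neg, ← sub_eq_add_neg]
  have hPu : IsUnit P := cayley_isUnit_factor hX
  have hQu : IsUnit Q := by
    rw [Matrix.isUnit_iff_isUnit_det] at hPu ⊢
    rwa [← hPt, Matrix.det_transpose]
  have hcomm : P * Q = Q * P := by
    rw [hP, hQ]
    simp [sub_mul, mul_sub, add_mul, mul_add, Matrix.smul_mul, Matrix.mul_smul]
    module
  have hPinvT : (P⁻¹)ᵀ = Q⁻¹ := by rw [Matrix.transpose_nonsing_inv, hPt]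
  have hinvcomm : Q⁻¹ * P⁻¹ = P⁻¹ * Q⁻¹ := by
    rw [← Matrix.mul_inv_rev, hcomm, Matrix.mul_inv_rev]
  unfold cayley
  rw [← hP, ← hQ, Matrix.transpose_mul, hPinvT, hQt]
  calc P * Q⁻¹ * (P⁻¹ * Q) = P * (Q⁻¹ * P⁻¹) * Q := by noncomm_ring
    _ = P * (P⁻¹ * Q⁻¹) * Q := by rw [hinvcomm]
    _ = (P * P⁻¹) * (Q⁻¹ * Q) := by noncomm_ring
    _ = 1 := by rw [Matrix.mul_nonsing_inv _ ((Matrix.isUnit_iff_isUnit_det _).mp hPu),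
          Matrix.nonsing_inv_mul _ ((Matrix.isUnit_iff_isUnit_det _).mp hQu), one_mul]

lemma commGen_skew {C M : Matrix (Fin n) (Fin n) ℝ} (hC : Cᵀ = C) :
    (commGen C M)ᵀ = -(commGen C M) := by
  unfold commGen diagPart
  have hA : (Mᵀ * C * M)ᵀ = Mᵀ * C * M := by
    simp [transpose_mul, hC, Matrix.mul_assoc]
  simp [transpose_sub, transpose_mul, hA, Matrix.diagonal_transpose]

lemma commGen_shift {C M : Matrix (Fin n) (Fin n) ℝ} (σ : ℝ) (hM : Mᵀ * M = 1) :
    commGen (C + σ • (1 : Matrix (Fin n) (Fin n) ℝ)) M = commGen C M := by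
  unfold commGen
  have h1 : Mᵀ * (C + σ • (1 : Matrix (Fin n) (Fin n) ℝ)) * M
      = Mᵀ * C * M + σ • (1 : Matrix (Fin n) (Fin n) ℝ) := by
    rw [mul_add, add_mul, Matrix.mul_smul, Matrix.smul_mul, mul_one, hM]
  rw [h1]
  set A := Mᵀ * C * M with hA
  have h2 : diagPart (A + σ • (1 : Matrix (Fin n) (Fin n) ℝ))
      = diagPart A + σ • (1 : Matrix (Fin n) (Fin n) ℝ) := by
    unfold diagPart
    ext i j
    by_cases h : i = j <;> simp [Matrix.diagonal, Matrix.one_apply, h]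
  rw [h2]
  set D := diagPart A
  simp [mul_add, add_mul, Matrix.mul_smul, Matrix.smul_mul]
  abel
end Aux

/-- **Pathwise invariance to isotropic shifts**: the Cayley double-bracket trajectory
generated by `C_k = C_sig + σ_k² I + E_k` coincides pointwise with the trajectory
generated by `C_k' = C_sig + E_k`. -/
theorem trajectory_invariant_of_isotropic_shift {n : ℕ} (hn : 1 ≤ n)
    (Csig : Matrix (Fin n) (Fin n) ℝ) (hCsig : Csigᵀ = Csig)
    (E : ℕ → Matrix (Fin n) (Fin n) ℝ) (hE : ∀ k, (E k)ᵀ = E k)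
    (σsq : ℕ → ℝ) (η : ℕ → ℝ)
    (M₀ : Matrix (Fin n) (Fin n) ℝ) (hM₀ : M₀ᵀ * M₀ = 1)
    (M N : ℕ → Matrix (Fin n) (Fin n) ℝ)
    (hM0 : M 0 = M₀) (hN0 : N 0 = M₀)
    (hMrec : ∀ k, M (k + 1) =
      M k * cayley (η k • commGen (Csig + σsq k • (1 : Matrix (Fin n) (Fin n) ℝ) + E k) (M k)))
    (hNrec : ∀ k, N (k + 1) =
      N k * cayley (η k • commGen (Csig + E k) (N k))) :
    ∀ k, M k = N k := by
  have key : ∀ k, M k = N k ∧ (M k)ᵀ * M k = 1 := by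
    intro k
    induction k with
    | zero => exact ⟨hM0.trans hN0.symm, by rw [hM0]; exact hM₀⟩
    | succ k ih =>
      obtain ⟨heq, horth⟩ := ih
      have hCsym : (Csig + σsq k • (1 : Matrix (Fin n) (Fin n) ℝ) + E k)ᵀ
          = Csig + σsq k • (1 : Matrix (Fin n) (Fin n) ℝ) + E k := by
        simp [transpose_add, transpose_smul, hCsig, hE k]
      have hXskew : (η k • commGen (Csig + σsq k • (1 : Matrix (Fin n) (Fin n) ℝ) + E k) (M k))ᵀ
          = -(η k • commGen (Csig + σsq k • (1 : Matrix (Fin n) (Fin n) ℝ) + E k) (M k)) := by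
        rw [transpose_smul, commGen_skew hCsym, smul_neg]
      have hshift : commGen (Csig + σsq k • (1 : Matrix (Fin n) (Fin n) ℝ) + E k) (M k)
          = commGen (Csig + E k) (M k) := by
        have h3 : Csig + σsq k • (1 : Matrix (Fin n) (Fin n) ℝ) + E k
            = (Csig + E k) + σsq k • (1 : Matrix (Fin n) (Fin n) ℝ) := by abel
        rw [h3, commGen_shift _ horth]
      refine ⟨?_, ?_⟩
      · rw [hMrec k, hNrec k, heq, ← heq, hshift]
      · rw [hMrec k, Matrix.transpose_mul]
        calc (cayley _)ᵀ * (M k)ᵀ * (M k * cayley _)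
            = (cayley _)ᵀ * ((M k)ᵀ * M k) * cayley _ := by noncomm_ring
          _ = (cayley _)ᵀ * cayley _ := by rw [horth, mul_one]
          _ = 1 := cayley_orthogonal hXskew
  exact fun k => (key k).1
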